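/- Let $\sigma = (a_1, \dots, a_s)$ be a partition of $r$ with $a_1 \ge a_2 \ge \dots \ge a_s \ge 1$, and let $q \ge a_1$ and $n \ge s$. Then for every $k$ with $1 \le k \le r-1$ there exists a $(q,k,\sigma)$-feasible sequence, i.e., a nonincreasing sequence $b_1 \ge b_2 \ge \dots \ge b_n \ge 0$ of nonnegative integers with $b_j = b_s$ for all $j \ge s$, $q \ge \max\{a_1, b_1\}$, and $\sum_{i=1}^{s} \min\{a_i, b_i\} = k$. -/

import Mathlib

theorem stmt_4 (r s n q : ℕ) (a : ℕ → ℕ)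
    (hs : 1 ≤ s)
    (hapos : ∀ i, 1 ≤ i → i ≤ s → 1 ≤ a i)
    (hamono : ∀ i j, 1 ≤ i → i ≤ j → j ≤ s → a j ≤ a i)
    (hsum : ∑ i ∈ Finset.Icc 1 s, a i = r)
    (hq : a 1 ≤ q) (hn : s ≤ n) :
    ∀ k, 1 ≤ k → k ≤ r - 1 →
      ∃ b : ℕ → ℕ,
        (∀ i j, 1 ≤ i → i ≤ j → j ≤ n → b j ≤ b i) ∧
        (∀ j, s ≤ j → j ≤ n → b j = b s) ∧
        b 1 ≤ q ∧
        ∑ i ∈ Finset.Icc 1 s, min (a i) (b i) = k := by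
  classical
  intro k hk1 hk2
  set F : ℕ → ℕ := fun c => ∑ i ∈ Finset.Icc 1 s, min (a i) c with hF
  have hFmono : ∀ c c', c ≤ c' → F c ≤ F c' := by
    intro c c' h
    exact Finset.sum_le_sum fun i _ => min_le_min le_rfl h
  have hF0 : F 0 = 0 := by simp [hF]
  have hFa1 : F (a 1) = r := by
    rw [hF, ← hsum]
    refine Finset.sum_congr rfl fun i hi => ?_
    simp only [Finset.mem_Icc] at hi
    exact min_eq_left (hamono 1 i le_rfl hi.1 hi.2)
  have hr1 : 1 ≤ r := by
    rw [← hsum]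
    calc 1 ≤ a 1 := hapos 1 le_rfl hs
    _ ≤ ∑ i ∈ Finset.Icc 1 s, a i :=
        Finset.single_le_sum (fun i _ => Nat.zero_le _) (by simp [Finset.mem_Icc, hs])
  have hkr : k < r := by omega
  have hP : ∃ c, k < F c := ⟨a 1, by omega⟩
  let N := Nat.find hP
  have hN : k < F N := Nat.find_spec hP
  have hN1 : 1 ≤ N := by
    rcases Nat.eq_zero_or_pos N with h | h
    · exfalso; rw [h] at hN; omega
    · exact h
  set c := N - 1 with hcdef
  have hc1 : F c ≤ k := le_of_not_gt (Nat.find_min hP (show c < N by omega))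
  have hc2 : k < F (c + 1) := by
    have hcn : c + 1 = N := by omega
    rw [hcn]; exact hN
  have hca : c < a 1 := by
    by_contra h
    push_neg at h
    have := hFmono (a 1) c h
    omega
  have hstep : F (c + 1) ≤ F c + s := by
    calc F (c + 1) ≤ ∑ i ∈ Finset.Icc 1 s, (min (a i) c + 1) :=
          Finset.sum_le_sum fun i _ => by omega
    _ = F c + s := by
          rw [Finset.sum_add_distrib, Finset.sum_const, Nat.card_Icc]
          simp [hF]
  set d := k - F c with hddef
  have hd : F c + d = k := by omega
  have hds : d < s := by omega
  have hkey : ∀ i, 1 ≤ i → i ≤ d → c + 1 ≤ a i := by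
    by_contra h
    push_neg at h
    obtain ⟨i, hi1, hid, hai⟩ := h
    have his : i ≤ s := le_trans hid (le_of_lt hds)
    have hbound : F (c + 1) ≤ F c + (i - 1) := by
      have h1 : F (c + 1) ≤ ∑ j ∈ Finset.Icc 1 s, (min (a j) c + if j < i then 1 else 0) := by
        refine Finset.sum_le_sum fun j hj => ?_
        simp only [Finset.mem_Icc] at hj
        by_cases hji : j < i
        · simp only [hji, if_true]; omega
        · simp only [hji, if_false]
          have : a j ≤ a i := hamono i j hi1 (by omega) hj.2
          omega
      rw [Finset.sum_add_distrib] at h1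
      have h2 : (∑ j ∈ Finset.Icc 1 s, if j < i then 1 else 0) = i - 1 := by
        rw [← Finset.sum_filter]
        have hfe : (Finset.Icc 1 s).filter (fun j => j < i) = Finset.Icc 1 (i - 1) := by
          ext j
          simp only [Finset.mem_filter, Finset.mem_Icc]
          omega
        rw [hfe, Finset.sum_const, Nat.card_Icc]
        simp
      rw [h2] at h1
      exact h1
    omega
  refine ⟨fun i => if i ≤ d then c + 1 else c, ?_, ?_, ?_, ?_⟩
  · intro i j _ hij _
    dsimp only
    by_cases h1 : i ≤ d <;> by_cases h2 : j ≤ d <;> simp [h1, h2] <;> omega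
  · intro j hsj _
    dsimp only
    rw [if_neg (by omega), if_neg (by omega)]
  · dsimp only
    by_cases h1 : 1 ≤ d <;> simp [h1] <;> omega
  · have hcong : ∀ i ∈ Finset.Icc 1 s,
        min (a i) (if i ≤ d then c + 1 else c) = min (a i) c + (if i ≤ d then 1 else 0) := by
      intro i hi
      simp only [Finset.mem_Icc] at hi
      by_cases h : i ≤ d
      · have := hkey i hi.1 h
        simp only [h, if_true]
        omega
      · simp [h]
    rw [Finset.sum_congr rfl hcong, Finset.sum_add_distrib]
    have h2 : (∑ j ∈ Finset.Icc 1 s, if j ≤ d then 1 else 0) = d := by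
      rw [← Finset.sum_filter]
      have hfe : (Finset.Icc 1 s).filter (fun j => j ≤ d) = Finset.Icc 1 d := by
        ext j
        simp only [Finset.mem_filter, Finset.mem_Icc]
        omega
      rw [hfe, Finset.sum_const, Nat.card_Icc]
      simp
    rw [h2]
    exact hd
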